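/- arXiv:1304.6488 — 2 statements merged into one kernel-verified Lean document; each statement's English description precedes it below -/
import Mathlib

section
/- Let M be a matroid and let S, T be disjoint subsets of E(M). For each e ∈ E(M) − (S ∪ T), at least one of the following holds: (1) κ_{M\e}(S,T) = κ_M(S,T), or (2) κ_{M/e}(S,T) = κ_M(S,T). -/
open Set Matroid

namespace Intertwine

variable {α : Type*}

/-- The (extended) rank of a set in a matroid: the supremum of the cardinalities of its
independent subsets. -/
noncomputable def eRk (M : Matroid α) (X : Set α) : ℕ∞ :=
  ⨆ I ∈ {I : Set α | M.Indep I ∧ I ⊆ X}, I.encard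

/-- The connectivity function `λ_M(X) = r(X) + r(E \ X) - r(M)`. -/
noncomputable def lam (M : Matroid α) (X : Set α) : ℕ∞ :=
  eRk M X + eRk M (M.E \ X) - eRk M M.E

/-- The connectivity between `S` and `T`:
`κ_M(S,T) = min {λ_M(X) : S ⊆ X ⊆ E \ T}`. -/
noncomputable def kap (M : Matroid α) (S T : Set α) : ℕ∞ :=
  ⨅ X ∈ {X : Set α | S ⊆ X ∧ X ⊆ M.E \ T}, lam M X

/-- Deletion of a set of elements. -/
def del (M : Matroid α) (D : Set α) : Matroid α := M ↾ (M.E \ D)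

/-- Contraction of a set of elements, via duality: `M / C = (M* \ C)*`. -/
def con (M : Matroid α) (C : Set α) : Matroid α := (del M✶ C)✶

/-- `N` is a minor of `M` if `N = M / C \ D` for disjoint subsets `C, D` of `E(M)`. -/
def IsMinor (N M : Matroid α) : Prop :=
  ∃ C D : Set α, C ⊆ M.E ∧ D ⊆ M.E ∧ Disjoint C D ∧ N = del (con M C) D

/-- `M` is representable over the field `𝔽` if its independent sets are exactly the
sets on which some vector-valued function is linearly independent. -/
def IsRepresentable (𝔽 : Type*) [Field 𝔽] (M : Matroid α) : Prop :=
  ∃ (B : Set α) (v : α → (B →₀ 𝔽)),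
    ∀ I : Set α, M.Indep I ↔ I ⊆ M.E ∧ LinearIndependent 𝔽 (fun x : I ↦ v x)

variable {M : Matroid α} {X Y A I B S T : Set α} {e : α} {c : ℕ∞}

/-! ### Basic facts about `eRk` -/

lemma le_eRk (hI : M.Indep I) (hIX : I ⊆ X) : I.encard ≤ eRk M X :=
  le_iSup₂_of_le I (⟨hI, hIX⟩ : I ∈ {I : Set α | M.Indep I ∧ I ⊆ X}) le_rfl

lemma eRk_le (h : ∀ I, M.Indep I → I ⊆ X → I.encard ≤ c) : eRk M X ≤ c :=
  iSup₂_le fun I hI => h I hI.1 hI.2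

lemma eRk_basis' (hI : M.IsBasis' I X) : eRk M X = I.encard := by
  refine le_antisymm (eRk_le fun J hJ hJX => ?_) (le_eRk hI.indep hI.subset)
  by_contra hlt
  push_neg at hlt
  obtain ⟨x, hx, hxi⟩ := hI.indep.augment hJ hlt
  exact hI.insert_not_indep ⟨hJX hx.1, hx.2⟩ hxi

lemma eRk_mono (h : X ⊆ Y) : eRk M X ≤ eRk M Y :=
  eRk_le fun I hI hIX => le_eRk hI (hIX.trans h)

lemma eRk_submod (M : Matroid α) (X Y : Set α) :
    eRk M (X ∪ Y) + eRk M (X ∩ Y) ≤ eRk M X + eRk M Y := by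
  obtain ⟨I, hI⟩ := M.exists_isBasis' (X ∩ Y)
  obtain ⟨J, hJ, hIJ⟩ := hI.indep.subset_isBasis'_of_subset (X := X ∪ Y)
    (hI.subset.trans (inter_subset_left.trans subset_union_left))
  rw [eRk_basis' hI, eRk_basis' hJ]
  have hJXY : (J ∩ X) ∪ (J ∩ Y) = J := by
    rw [← inter_union_distrib_left]; exact inter_eq_left.mpr hJ.subset
  have key := encard_union_add_encard_inter (J ∩ X) (J ∩ Y)
  rw [hJXY] at key
  have hIsub : I ⊆ (J ∩ X) ∩ (J ∩ Y) :=
    subset_inter (subset_inter hIJ (hI.subset.trans inter_subset_left))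
      (subset_inter hIJ (hI.subset.trans inter_subset_right))
  have hcalc : J.encard + I.encard ≤ (J ∩ X).encard + (J ∩ Y).encard :=
    key ▸ add_le_add_right (encard_mono hIsub) _
  refine hcalc.trans (add_le_add (le_eRk (hJ.indep.subset inter_subset_left) inter_subset_right)
    (le_eRk (hJ.indep.subset inter_subset_left) inter_subset_right))

lemma eRk_subadd (h : X ∪ Y = A) : eRk M A ≤ eRk M X + eRk M Y := by
  have := eRk_submod M X Y
  rw [h] at this
  exact le_trans le_self_add this

lemma eRk_insert_le (M : Matroid α) (e : α) (X : Set α) :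
    eRk M (insert e X) ≤ eRk M X + 1 := by
  refine eRk_le fun I hI hIX => ?_
  by_cases heI : e ∈ I
  · rw [← encard_diff_singleton_add_one heI]
    exact add_le_add_left (le_eRk (hI.subset diff_subset)
      (by rw [diff_subset_iff, singleton_union]; exact hIX)) 1
  · exact le_trans (le_eRk hI fun x hx => ((hIX hx).resolve_left (fun h => heI (h ▸ hx)))) le_self_add

lemma enat_le_sub_one {x R : ℕ∞} (h : x + 1 ≤ R) : x ≤ R - 1 := by
  rcases eq_or_ne R ⊤ with rfl | hR
  · exact le_top.trans_eq (by simp)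
  have hx : x ≠ ⊤ := fun h' => hR (top_le_iff.mp (le_trans (by simp [h']) h))
  lift R to ℕ using hR; lift x to ℕ using hx
  have h' : x + 1 ≤ R := by exact_mod_cast h
  have hgoal : x ≤ R - 1 := by omega
  exact_mod_cast hgoal

lemma eRk_ne_top (h : X ⊆ M.E) (hR : eRk M M.E ≠ ⊤) : eRk M X ≠ ⊤ :=
  fun ht => hR (top_le_iff.mp (ht ▸ eRk_mono h))

/-! ### Loops -/

lemma eRk_insert_loop (hl : ¬ M.Indep {e}) (X : Set α) :
    eRk M (insert e X) = eRk M X := by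
  refine le_antisymm (eRk_le fun I hI hIX => le_eRk hI fun x hx => ?_) (eRk_mono (subset_insert _ _))
  rcases hIX hx with h | h
  · exact absurd (hI.subset (by simpa [h] using singleton_subset_iff.mpr hx)) hl
  · exact h

/-! ### Deletion -/

@[simp] lemma del_ground (M : Matroid α) (D : Set α) : (del M D).E = M.E \ D := rfl

lemma eRk_del (M : Matroid α) (e : α) (A : Set α) :
    eRk (del M {e}) A = eRk M (A \ {e}) := by
  refine le_antisymm (eRk_le fun I hI hIA => ?_) (eRk_le fun I hI hIA => ?_)
  · simp only [del, restrict_indep_iff] at hI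
    exact le_eRk hI.1 (subset_diff_singleton hIA fun h => (hI.2 h).2 rfl)
  · refine le_eRk (M := del M {e}) ?_ (hIA.trans diff_subset)
    simp only [del, restrict_indep_iff]
    exact ⟨hI, subset_diff_singleton hI.subset_ground fun h => (hIA h).2 rfl⟩

/-! ### Contraction -/

@[simp] lemma con_ground (M : Matroid α) (C : Set α) : (con M C).E = M.E \ C := rfl

lemma basis_base_of_nonloop (he : M.Indep {e}) (hB : M✶.IsBasis B (M.E \ {e})) :
    M✶.IsBase B := by
  have heE : e ∈ M.E := singleton_subset_iff.mp he.subset_ground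
  obtain ⟨B'', hB'', hBeq⟩ := hB.exists_isBase
  by_cases heB : e ∈ B''
  · exfalso
    have h175 := hB''.compl_inter_isBasis_of_inter_isBasis (X := M.E \ {e}) (by rwa [← hBeq])
    rw [dual_dual, dual_ground, diff_diff_cancel_left (singleton_subset_iff.mpr heE)] at h175
    have h0 : (M.E \ B'') ∩ {e} = ∅ := by
      rw [eq_empty_iff_forall_notMem]
      rintro x ⟨⟨-, hxB⟩, rfl⟩
      exact hxB heB
    rw [h0] at h175
    have := h175.eq_of_subset_indep he (empty_subset _) Subset.rfl
    exact (singleton_ne_empty e) this.symm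
  · have hBB : B = B'' := by
      rw [hBeq, inter_eq_left]
      exact subset_diff_singleton (by simpa using hB''.subset_ground) heB
    rwa [hBB]

lemma con_indep_iff (he : M.Indep {e}) :
    (con M {e}).Indep I ↔ I ⊆ M.E \ {e} ∧ M.Indep (insert e I) := by
  have heE : e ∈ M.E := singleton_subset_iff.mp he.subset_ground
  rw [con, del, dual_indep_iff_exists']
  simp only [restrict_ground_eq, dual_ground]
  constructor
  · rintro ⟨hIE, B, hBbase, hdis⟩
    rw [isBase_restrict_iff'] at hBbase
    have hBb : M✶.IsBasis B (M.E \ {e}) := hBbase.isBasis diff_subset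
    have hBfull := basis_base_of_nonloop he hBb
    refine ⟨hIE, ?_⟩
    rw [← dual_dual M, dual_indep_iff_exists']
    refine ⟨insert_subset heE (hIE.trans diff_subset), B, hBfull, ?_⟩
    exact (disjoint_singleton_left.mpr fun h => (hBb.subset h).2 rfl).union_left hdis |>.mono_left
      (by rw [← singleton_union])
  · rintro ⟨hIE, hi⟩
    obtain ⟨W, hW, hsub⟩ := hi.exists_isBase_superset
    have heW : e ∈ W := hsub (mem_insert _ _)
    have hXb : M.IsBasis (W ∩ {e}) {e} := by
      rw [inter_eq_self_of_subset_right (singleton_subset_iff.mpr heW)]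
      exact he.isBasis_self
    have h := (hW.inter_isBasis_iff_compl_inter_isBasis_dual (X := {e})
      (singleton_subset_iff.mpr heE)).mp hXb
    have hWsub : M.E \ W ⊆ M.E \ {e} := diff_subset_diff_right (singleton_subset_iff.mpr heW)
    rw [inter_eq_self_of_subset_left hWsub] at h
    refine ⟨hIE, M.E \ W, ?_, ?_⟩
    · rw [isBase_restrict_iff']
      exact h.isBasis'
    · exact disjoint_sdiff_right.mono_left ((subset_insert e I).trans hsub)

lemma eRk_con_add_one (he : M.Indep {e}) (hA : A ⊆ M.E \ {e}) :
    eRk (con M {e}) A + 1 = eRk M (insert e A) := by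
  have heE : e ∈ M.E := singleton_subset_iff.mp he.subset_ground
  apply le_antisymm
  · rcases eq_or_ne (eRk M (insert e A)) ⊤ with h | h
    · exact h ▸ le_top
    have h1 : (1 : ℕ∞) ≤ eRk M (insert e A) := by
      have := le_eRk (X := insert e A) he (singleton_subset_iff.mpr (mem_insert _ _))
      simpa using this
    have hle : eRk (con M {e}) A ≤ eRk M (insert e A) - 1 := by
      refine eRk_le fun I hI hIA => enat_le_sub_one ?_
      rw [con_indep_iff he] at hI
      have hcard := le_eRk hI.2 (insert_subset_insert hIA)
      rwa [encard_insert_of_notMem (fun heI => (hI.1 heI).2 rfl)] at hcard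
    calc eRk (con M {e}) A + 1 ≤ (eRk M (insert e A) - 1) + 1 := add_le_add_left hle 1
      _ = eRk M (insert e A) := tsub_add_cancel_of_le h1
  · obtain ⟨J, hJ, heJ⟩ := he.subset_isBasis'_of_subset (singleton_subset_iff.mpr (mem_insert e A))
    have heJ' : e ∈ J := heJ rfl
    rw [eRk_basis' hJ, ← encard_diff_singleton_add_one heJ']
    have hIc : (con M {e}).Indep (J \ {e}) := by
      rw [con_indep_iff he]
      refine ⟨diff_subset_diff_left hJ.indep.subset_ground, ?_⟩
      rw [insert_diff_singleton, insert_eq_self.mpr heJ']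
      exact hJ.indep
    have hJA : J \ {e} ⊆ A := by
      rw [diff_subset_iff, singleton_union]
      exact hJ.subset
    exact add_le_add_left (le_eRk hIc hJA) 1


/-! ### `kap` basics -/

lemma kap_le (hX1 : S ⊆ X) (hX2 : X ⊆ M.E \ T) : kap M S T ≤ lam M X :=
  iInf₂_le X ⟨hX1, hX2⟩

lemma le_kap (h : ∀ X, S ⊆ X → X ⊆ M.E \ T → c ≤ lam M X) : c ≤ kap M S T :=
  le_iInf₂ fun X hX => h X hX.1 hX.2

/-! ### ENat arithmetic helpers -/

lemma H1 {a b c d e f : ℕ∞} (ha : a ≠ ⊤) (hb : b ≠ ⊤) (hd : d ≠ ⊤) (he : e ≠ ⊤)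
    (h2 : f ≤ d + e) (h3 : a + b + f ≤ d + e + c) : a + b - c ≤ d + e - f := by
  have hde : d + e ≠ ⊤ := by rw [Ne, ENat.add_eq_top]; tauto
  have hf : f ≠ ⊤ := fun h => hde (top_le_iff.mp (h ▸ h2))
  rcases eq_or_ne c ⊤ with rfl | hc
  · exact le_trans (le_of_eq (tsub_eq_zero_of_le le_top)) zero_le
  lift a to ℕ using ha; lift b to ℕ using hb; lift c to ℕ using hc
  lift d to ℕ using hd; lift e to ℕ using he; lift f to ℕ using hf
  have h2' : f ≤ d + e := by exact_mod_cast h2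
  have h3' : a + b + f ≤ d + e + c := by exact_mod_cast h3
  have hgoal : a + b - c ≤ d + e - f := by omega
  exact_mod_cast hgoal

lemma H2 {a b c p q R : ℕ∞} (hp : p ≠ ⊤) (hq : q ≠ ⊤) (hR : R ≠ ⊤)
    (ea : a + 1 = p) (eb : b + 1 ≤ q + 1) (ec : c + 1 = R) (hsub : R ≤ p + q) :
    a + b - c ≤ p + q - R := by
  have ha : a ≠ ⊤ := fun h => hp (by rw [← ea, h, top_add])
  have hc : c ≠ ⊤ := fun h => hR (by rw [← ec, h, top_add])
  have hq1 : q + 1 ≠ ⊤ := by rw [Ne, ENat.add_eq_top]; simp [hq]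
  have hb : b ≠ ⊤ := fun h => hq1 (top_le_iff.mp (by rw [h, top_add] at eb; exact eb))
  lift p to ℕ using hp; lift q to ℕ using hq; lift R to ℕ using hR
  lift a to ℕ using ha; lift b to ℕ using hb; lift c to ℕ using hc
  have ea' : a + 1 = p := by exact_mod_cast ea
  have eb' : b + 1 ≤ q + 1 := by exact_mod_cast eb
  have ec' : c + 1 = R := by exact_mod_cast ec
  have hsub' : R ≤ p + q := by exact_mod_cast hsub
  have hgoal : a + b - c ≤ p + q - R := by omega
  exact_mod_cast hgoal

lemma H3 {p1 q1 p2 q2 a b Re u v w R : ℕ∞}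
    (hp1 : p1 ≠ ⊤) (hq1 : q1 ≠ ⊤) (hp2 : p2 ≠ ⊤) (hq2 : q2 ≠ ⊤)
    (ha : a ≠ ⊤) (hb : b ≠ ⊤) (hu : u ≠ ⊤) (hv : v ≠ ⊤) (hRe : Re ≠ ⊤) (hR : R ≠ ⊤)
    (s1 : p1 + p2 ≤ a + (u + 1)) (s2 : q2 + q1 ≤ b + (v + 1)) (m : Re ≤ R)
    (ew : w + 1 = R) (t1 : R ≤ p1 + q1) (t2 : R ≤ p2 + q2) (t3 : Re ≤ a + b)
    (t4 : w ≤ u + v) :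
    (p1 + q1 - R) + (p2 + q2 - R) ≤ (a + b - Re) + (u + v - w) + 1 := by
  have hw : w ≠ ⊤ := fun h => hR (by rw [← ew, h]; rfl)
  lift p1 to ℕ using hp1; lift q1 to ℕ using hq1; lift p2 to ℕ using hp2
  lift q2 to ℕ using hq2; lift a to ℕ using ha; lift b to ℕ using hb
  lift u to ℕ using hu; lift v to ℕ using hv; lift Re to ℕ using hRe
  lift R to ℕ using hR; lift w to ℕ using hw
  have s1' : p1 + p2 ≤ a + (u + 1) := by exact_mod_cast s1
  have s2' : q2 + q1 ≤ b + (v + 1) := by exact_mod_cast s2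
  have m' : Re ≤ R := by exact_mod_cast m
  have ew' : w + 1 = R := by exact_mod_cast ew
  have t1' : R ≤ p1 + q1 := by exact_mod_cast t1
  have t2' : R ≤ p2 + q2 := by exact_mod_cast t2
  have t3' : Re ≤ a + b := by exact_mod_cast t3
  have t4' : w ≤ u + v := by exact_mod_cast t4
  have hgoal : (p1 + q1 - R) + (p2 + q2 - R) ≤ (a + b - Re) + (u + v - w) + 1 := by omega
  exact_mod_cast hgoal

lemma H4 {k x y : ℕ∞} (hk : k ≠ ⊤) (h1 : x + 1 ≤ k) (h2 : y + 1 ≤ k)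
    (h3 : k + k ≤ x + y + 1) : False := by
  have hx : x ≠ ⊤ := fun h => hk (top_le_iff.mp (le_trans (by rw [h]; exact le_top) h1))
  have hy : y ≠ ⊤ := fun h => hk (top_le_iff.mp (le_trans (by rw [h]; exact le_top) h2))
  lift k to ℕ using hk; lift x to ℕ using hx; lift y to ℕ using hy
  have h1' : x + 1 ≤ k := by exact_mod_cast h1
  have h2' : y + 1 ≤ k := by exact_mod_cast h2
  have h3' : k + k ≤ x + y + 1 := by exact_mod_cast h3
  omega
/-! ### Loop case: deletion of a loop preserves `lam` exactly -/

lemma eRk_diff_loop (hl : ¬ M.Indep {e}) (A : Set α) : eRk M (A \ {e}) = eRk M A := by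
  rw [← eRk_insert_loop hl (A \ {e}), insert_diff_singleton, eRk_insert_loop hl A]

lemma lam_del_loop (hl : ¬ M.Indep {e}) (heE : e ∈ M.E) (hX : X ⊆ M.E) :
    lam (del M {e}) (X \ {e}) = lam M X := by
  have hset : (M.E \ {e}) \ (X \ {e}) = (M.E \ X) \ {e} := by
    ext x
    simp only [mem_diff, mem_singleton_iff]
    tauto
  have d1 : ∀ A : Set α, (A \ {e}) \ {e} = A \ {e} := fun A => by rw [diff_diff, union_self]
  rw [lam, lam, del_ground, eRk_del, eRk_del, eRk_del, d1 X, hset, d1 (M.E \ X), d1 M.E,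
    eRk_diff_loop hl X, eRk_diff_loop hl (M.E \ X), eRk_diff_loop hl M.E]

/-! ### Key inequality 1 : deletion does not increase `lam` -/

lemma key1 (hR : eRk M M.E ≠ ⊤) (hX : X ⊆ M.E) :
    lam (del M {e}) (X \ {e}) ≤ lam M X := by
  have hset : (M.E \ {e}) \ (X \ {e}) = (M.E \ X) \ {e} := by
    ext x; simp only [mem_diff, mem_singleton_iff]; tauto
  have d1 : ∀ A : Set α, (A \ {e}) \ {e} = A \ {e} := fun A => by rw [diff_diff, union_self]
  rw [lam, lam, del_ground, eRk_del, eRk_del, eRk_del, d1 X, hset, d1 (M.E \ X), d1 M.E]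
  -- goal : eRk M (X\{e}) + eRk M ((M.E\X)\{e}) - eRk M (M.E\{e})
  --          ≤ eRk M X + eRk M (M.E\X) - eRk M M.E
  have fin : ∀ A : Set α, A ⊆ M.E → eRk M A ≠ ⊤ := fun A hA => eRk_ne_top hA hR
  refine H1 (fin _ ((diff_subset.trans hX))) (fin _ (diff_subset.trans diff_subset))
    (fin _ hX) (fin _ diff_subset) (eRk_subadd (union_diff_cancel hX)) ?_
  by_cases heX : e ∈ X
  · have h1 : (M.E \ X) \ {e} = M.E \ X :=
      diff_singleton_eq_self (fun h => h.2 heX)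
    have hsub := eRk_submod M X (M.E \ {e})
    have e1 : X ∪ (M.E \ {e}) = M.E := by
      apply subset_antisymm (union_subset hX diff_subset)
      intro x hx
      by_cases hxe : x = e
      · exact Or.inl (hxe ▸ heX)
      · exact Or.inr ⟨hx, hxe⟩
    have e2 : X ∩ (M.E \ {e}) = X \ {e} := by
      ext x
      simp only [mem_inter_iff, mem_diff, mem_singleton_iff]
      have := hX (a := x)
      tauto
    rw [e1, e2] at hsub
    rw [h1]
    calc eRk M (X \ {e}) + eRk M (M.E \ X) + eRk M M.E
        = (eRk M M.E + eRk M (X \ {e})) + eRk M (M.E \ X) := by ring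
      _ ≤ (eRk M X + eRk M (M.E \ {e})) + eRk M (M.E \ X) := add_le_add_left hsub _
      _ = eRk M X + eRk M (M.E \ X) + eRk M (M.E \ {e}) := by ring
  · have h1 : X \ {e} = X := diff_singleton_eq_self heX
    have hsub := eRk_submod M (M.E \ X) (M.E \ {e})
    have e1 : (M.E \ X) ∪ (M.E \ {e}) = M.E := by
      apply subset_antisymm (union_subset diff_subset diff_subset)
      intro x hx
      by_cases hxe : x = e
      · exact Or.inl ⟨hx, fun h => heX (hxe ▸ h)⟩
      · exact Or.inr ⟨hx, hxe⟩
    have e2 : (M.E \ X) ∩ (M.E \ {e}) = (M.E \ X) \ {e} := by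
      ext x; simp only [mem_inter_iff, mem_diff, mem_singleton_iff]; tauto
    rw [e1, e2] at hsub
    rw [h1]
    calc eRk M X + eRk M ((M.E \ X) \ {e}) + eRk M M.E
        = (eRk M M.E + eRk M ((M.E \ X) \ {e})) + eRk M X := by ring
      _ ≤ (eRk M (M.E \ X) + eRk M (M.E \ {e})) + eRk M X := add_le_add_left hsub _
      _ = eRk M X + eRk M (M.E \ X) + eRk M (M.E \ {e}) := by ring

/-! ### Key inequality 2 : contraction does not increase `lam` -/

lemma key2 (he : M.Indep {e}) (hR : eRk M M.E ≠ ⊤) (hX : X ⊆ M.E) :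
    lam (con M {e}) (X \ {e}) ≤ lam M X := by
  have heE : e ∈ M.E := singleton_subset_iff.mp he.subset_ground
  have fin : ∀ A : Set α, A ⊆ M.E → eRk M A ≠ ⊤ := fun A hA => eRk_ne_top hA hR
  have hset : (M.E \ {e}) \ (X \ {e}) = (M.E \ X) \ {e} := by
    ext x; simp only [mem_diff, mem_singleton_iff]; tauto
  have ea : eRk (con M {e}) (X \ {e}) + 1 = eRk M (insert e X) := by
    rw [eRk_con_add_one he (diff_subset_diff_left hX), insert_diff_singleton]
  have eb : eRk (con M {e}) ((M.E \ {e}) \ (X \ {e})) + 1 = eRk M (insert e (M.E \ X)) := by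
    rw [hset, eRk_con_add_one he (diff_subset_diff_left diff_subset), insert_diff_singleton]
  have ec : eRk (con M {e}) (M.E \ {e}) + 1 = eRk M M.E := by
    rw [eRk_con_add_one he Subset.rfl, insert_diff_singleton, insert_eq_self.mpr heE]
  have hcsub : eRk (con M {e}) (M.E \ {e}) ≤
      eRk (con M {e}) (X \ {e}) + eRk (con M {e}) ((M.E \ {e}) \ (X \ {e})) :=
    eRk_subadd (union_diff_cancel (diff_subset_diff_left hX))
  rw [lam, lam, con_ground]
  by_cases heX : e ∈ X
  · have e1 : insert e X = X := insert_eq_self.mpr heX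
    rw [e1] at ea
    refine H2 (fin _ hX) (fin _ diff_subset) hR ea ?_ ec (eRk_subadd (union_diff_cancel hX))
    rw [eb]
    exact eRk_insert_le M e (M.E \ X)
  · have e1 : insert e (M.E \ X) = M.E \ X := insert_eq_self.mpr ⟨heE, heX⟩
    rw [e1] at eb
    rw [add_comm (eRk (con M {e}) (X \ {e})), add_comm (eRk M X)]
    refine H2 (fin _ diff_subset) (fin _ hX) hR eb ?_ ec
      (by rw [add_comm]; exact eRk_subadd (union_diff_cancel hX))
    rw [ea]
    exact eRk_insert_le M e X

/-! ### Key inequality 3 : the submodular exchange bound -/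

lemma key3 (he : M.Indep {e}) (hR : eRk M M.E ≠ ⊤)
    (hX : X ⊆ M.E \ {e}) (hY : Y ⊆ M.E \ {e}) :
    lam M (X ∩ Y) + lam M (insert e (X ∪ Y)) ≤
      lam (del M {e}) X + lam (con M {e}) Y + 1 := by
  have heE : e ∈ M.E := singleton_subset_iff.mp he.subset_ground
  have fin : ∀ A : Set α, A ⊆ M.E → eRk M A ≠ ⊤ := fun A hA => eRk_ne_top hA hR
  have heX : e ∉ X := fun h => (hX h).2 rfl
  have heY : e ∉ Y := fun h => (hY h).2 rfl
  have hXE : X ⊆ M.E := hX.trans diff_subset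
  have hYE : Y ⊆ M.E := hY.trans diff_subset
  -- deletion side
  have da : eRk (del M {e}) X = eRk M X := by
    rw [eRk_del, diff_singleton_eq_self heX]
  have db : eRk (del M {e}) ((M.E \ {e}) \ X) = eRk M ((M.E \ {e}) \ X) := by
    rw [eRk_del]
    congr 1
    ext x; simp only [mem_diff, mem_singleton_iff]; tauto
  have dc : eRk (del M {e}) (M.E \ {e}) = eRk M (M.E \ {e}) := by
    rw [eRk_del, diff_diff, union_self]
  -- contraction side
  have eu : eRk (con M {e}) Y + 1 = eRk M (insert e Y) := by
    rw [eRk_con_add_one he hY]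
  have ev : eRk (con M {e}) ((M.E \ {e}) \ Y) + 1 = eRk M (M.E \ Y) := by
    rw [eRk_con_add_one he diff_subset]
    congr 1
    ext x
    simp only [mem_insert_iff, mem_diff, mem_singleton_iff]
    constructor
    · rintro (rfl | ⟨⟨h1, -⟩, h2⟩)
      · exact ⟨heE, heY⟩
      · exact ⟨h1, h2⟩
    · rintro ⟨h1, h2⟩
      by_cases hxe : x = e
      · exact Or.inl hxe
      · exact Or.inr ⟨⟨h1, hxe⟩, h2⟩
  have ew : eRk (con M {e}) (M.E \ {e}) + 1 = eRk M M.E := by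
    rw [eRk_con_add_one he Subset.rfl, insert_diff_singleton, insert_eq_self.mpr heE]
  -- set identities for the `lam` terms of M
  have hq2 : M.E \ insert e (X ∪ Y) = (M.E \ {e}) \ (X ∪ Y) := by
    ext x; simp only [mem_diff, mem_insert_iff, mem_union, mem_singleton_iff]; tauto
  -- submodularity instances
  have s1 : eRk M (insert e (X ∪ Y)) + eRk M (X ∩ Y) ≤ eRk M X + eRk M (insert e Y) := by
    have := eRk_submod M X (insert e Y)
    have e1 : X ∪ insert e Y = insert e (X ∪ Y) := union_insert
    have e2 : X ∩ insert e Y = X ∩ Y := by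
      ext x
      simp only [mem_inter_iff, mem_insert_iff]
      constructor
      · rintro ⟨h1, rfl | h2⟩
        · exact absurd h1 heX
        · exact ⟨h1, h2⟩
      · tauto
    rwa [e1, e2] at this
  have s2 : eRk M (M.E \ (X ∩ Y)) + eRk M ((M.E \ {e}) \ (X ∪ Y)) ≤
      eRk M ((M.E \ {e}) \ X) + eRk M (M.E \ Y) := by
    have := eRk_submod M ((M.E \ {e}) \ X) (M.E \ Y)
    have e1 : ((M.E \ {e}) \ X) ∪ (M.E \ Y) = M.E \ (X ∩ Y) := by
      ext x
      simp only [mem_union, mem_diff, mem_singleton_iff, mem_inter_iff]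
      constructor
      · rintro (⟨⟨h1, -⟩, h2⟩ | ⟨h1, h2⟩) <;> tauto
      · rintro ⟨h1, h2⟩
        by_cases hxY : x ∈ Y
        · exact Or.inl ⟨⟨h1, fun hxe => heY (hxe ▸ hxY)⟩, fun hxX => h2 ⟨hxX, hxY⟩⟩
        · exact Or.inr ⟨h1, hxY⟩
    have e2 : ((M.E \ {e}) \ X) ∩ (M.E \ Y) = (M.E \ {e}) \ (X ∪ Y) := by
      ext x; simp only [mem_inter_iff, mem_diff, mem_singleton_iff, mem_union]; tauto
    rwa [e1, e2] at this
  rw [lam, lam, lam, lam, del_ground, con_ground, da, db, dc, hq2]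
  -- apply H3
  refine H3 (fin _ (inter_subset_left.trans hXE)) (fin _ diff_subset)
    (fin _ (insert_subset heE (union_subset hXE hYE))) (fin _ (diff_subset.trans diff_subset))
    (fin _ hXE) (fin _ (diff_subset.trans diff_subset))
    (fun h => (fin _ (insert_subset heE hYE)) (by rw [← eu, h, top_add]))
    (fun h => (fin _ diff_subset) (by rw [← ev, h, top_add]))
    (fin _ diff_subset) hR ?_ ?_ (eRk_mono diff_subset) ew
    (eRk_subadd (union_diff_cancel (inter_subset_left.trans hXE)))
    (eRk_subadd (show insert e (X ∪ Y) ∪ ((M.E \ {e}) \ (X ∪ Y)) = M.E by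
      rw [← hq2]; exact union_diff_cancel (insert_subset heE (union_subset hXE hYE))))
    (eRk_subadd (union_diff_cancel hX))
    (eRk_subadd (M := con M {e}) (union_diff_cancel (show Y ⊆ M.E \ {e} from hY)))
  · rw [eu]
    calc eRk M (X ∩ Y) + eRk M (insert e (X ∪ Y))
        = eRk M (insert e (X ∪ Y)) + eRk M (X ∩ Y) := by ring
      _ ≤ eRk M X + eRk M (insert e Y) := s1
  · rw [ev]
    calc eRk M ((M.E \ {e}) \ (X ∪ Y)) + eRk M (M.E \ (X ∩ Y))
        = eRk M (M.E \ (X ∩ Y)) + eRk M ((M.E \ {e}) \ (X ∪ Y)) := by ring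
      _ ≤ eRk M ((M.E \ {e}) \ X) + eRk M (M.E \ Y) := s2

/-! ### Rank-infinite case -/

lemma lam_eq_zero_of_rank_top {N : Matroid α} (hR : eRk N N.E = ⊤) (X : Set α) :
    lam N X = 0 := by
  rw [lam, hR]
  exact tsub_eq_zero_of_le le_top

lemma kap_eq_zero_of_rank_top {N : Matroid α} (hR : eRk N N.E = ⊤)
    (hS : S ⊆ N.E) (hST : Disjoint S T) : kap N S T = 0 := by
  refine le_antisymm ?_ zero_le
  exact (kap_le Subset.rfl (subset_diff.mpr ⟨hS, hST⟩)).trans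
    (lam_eq_zero_of_rank_top hR S).le

end Intertwine
open Intertwine in
/-- For every `e ∈ E(M) \ (S ∪ T)`, either deleting or contracting `e` preserves
`κ(S,T)`. -/
theorem del_or_con_preserves_kap {α : Type*} (M : Matroid α)
    (S T : Set α) (hS : S ⊆ M.E) (hT : T ⊆ M.E) (hST : Disjoint S T)
    (e : α) (he : e ∈ M.E \ (S ∪ T)) :
    kap (del M {e}) S T = kap M S T ∨ kap (con M {e}) S T = kap M S T := by
  obtain ⟨heE, heST⟩ := he
  have heS : e ∉ S := fun h => heST (Or.inl h)
  have heT : e ∉ T := fun h => heST (Or.inr h)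
  have hSe : S ⊆ M.E \ {e} := subset_diff.mpr ⟨hS, disjoint_singleton_right.mpr heS⟩
  by_cases hRtop : Intertwine.eRk M M.E = ⊤
  · -- infinite rank : everything is zero
    left
    have hRd : Intertwine.eRk (del M {e}) (del M {e}).E = ⊤ := by
      rw [del_ground, eRk_del, diff_diff, union_self]
      have h1 := eRk_insert_le M e (M.E \ {e})
      rw [insert_diff_singleton, insert_eq_self.mpr heE, hRtop] at h1
      rcases eq_or_ne (Intertwine.eRk M (M.E \ {e})) ⊤ with h | h
      · exact h
      · exact absurd (top_le_iff.mp h1) (by simp [h])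
    rw [kap_eq_zero_of_rank_top hRd (by rw [del_ground]; exact hSe) hST,
      kap_eq_zero_of_rank_top hRtop hS hST]
  by_cases hloop : M.Indep {e}
  · -- e is a nonloop
    have hkd : kap (del M {e}) S T ≤ kap M S T := by
      refine le_kap fun X hSX hXT => ?_
      refine le_trans (kap_le (M := del M {e}) (X := X \ {e})
        (subset_diff_singleton hSX heS) ?_) (key1 hRtop (hXT.trans diff_subset))
      rw [del_ground]
      exact fun x hx => ⟨⟨(hXT hx.1).1, hx.2⟩, (hXT hx.1).2⟩
    have hkc : kap (con M {e}) S T ≤ kap M S T := by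
      refine le_kap fun X hSX hXT => ?_
      refine le_trans (kap_le (M := con M {e}) (X := X \ {e})
        (subset_diff_singleton hSX heS) ?_) (key2 hloop hRtop (hXT.trans diff_subset))
      rw [con_ground]
      exact fun x hx => ⟨⟨(hXT hx.1).1, hx.2⟩, (hXT hx.1).2⟩
    by_contra hcon
    push_neg at hcon
    obtain ⟨h1, h2⟩ := hcon
    have lt1 : kap (del M {e}) S T < kap M S T := hkd.lt_of_ne h1
    have lt2 : kap (con M {e}) S T < kap M S T := hkc.lt_of_ne h2
    have hkM : kap M S T ≠ ⊤ := by
      have hfin : lam M S ≠ ⊤ := by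
        rw [lam]
        have hab : Intertwine.eRk M S + Intertwine.eRk M (M.E \ S) ≠ ⊤ :=
          WithTop.add_ne_top.mpr ⟨eRk_ne_top hS hRtop, eRk_ne_top diff_subset hRtop⟩
        exact fun h => hab (top_le_iff.mp (h ▸ tsub_le_self))
      exact fun h => hfin (top_le_iff.mp (h ▸ kap_le Subset.rfl (subset_diff.mpr ⟨hS, hST⟩)))
    -- extract near-optimal witnesses
    obtain ⟨X, hXf, hXlt⟩ : ∃ X, (S ⊆ X ∧ X ⊆ (del M {e}).E \ T) ∧
        lam (del M {e}) X < kap M S T := by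
      have := lt1
      rw [kap] at this
      rw [iInf_lt_iff] at this
      obtain ⟨X, hX⟩ := this
      rw [iInf_lt_iff] at hX
      obtain ⟨hXm, hXlt⟩ := hX
      exact ⟨X, hXm, hXlt⟩
    obtain ⟨Y, hYf, hYlt⟩ : ∃ Y, (S ⊆ Y ∧ Y ⊆ (con M {e}).E \ T) ∧
        lam (con M {e}) Y < kap M S T := by
      have := lt2
      rw [kap] at this
      rw [iInf_lt_iff] at this
      obtain ⟨Y, hY⟩ := this
      rw [iInf_lt_iff] at hY
      obtain ⟨hYm, hYlt⟩ := hY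
      exact ⟨Y, hYm, hYlt⟩
    have hXe : X ⊆ M.E \ {e} := hXf.2.trans (by rw [del_ground]; exact diff_subset)
    have hYe : Y ⊆ M.E \ {e} := hYf.2.trans (by rw [con_ground]; exact diff_subset)
    have hXT' : X ⊆ M.E \ T := hXf.2.trans (by rw [del_ground]
                                               exact diff_subset_diff_left diff_subset)
    have hYT' : Y ⊆ M.E \ T := hYf.2.trans (by rw [con_ground]
                                               exact diff_subset_diff_left diff_subset)
    have c1 : kap M S T ≤ lam M (X ∩ Y) :=
      kap_le (subset_inter hXf.1 hYf.1) (inter_subset_left.trans hXT')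
    have c2 : kap M S T ≤ lam M (insert e (X ∪ Y)) :=
      kap_le (hXf.1.trans (subset_union_left.trans (subset_insert _ _)))
        (insert_subset ⟨heE, heT⟩ (union_subset hXT' hYT'))
    have c3 := key3 hloop hRtop hXe hYe
    have c4 : lam (del M {e}) X + 1 ≤ kap M S T := by
      have hne : lam (del M {e}) X ≠ ⊤ := fun h => hkM (top_le_iff.mp (h ▸ hXlt.le))
      exact ENat.add_one_le_iff hne |>.mpr hXlt
    have c5 : lam (con M {e}) Y + 1 ≤ kap M S T := by
      have hne : lam (con M {e}) Y ≠ ⊤ := fun h => hkM (top_le_iff.mp (h ▸ hYlt.le))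
      exact ENat.add_one_le_iff hne |>.mpr hYlt
    exact H4 hkM c4 c5 (le_trans (add_le_add c1 c2) c3)
  · -- e is a loop : deletion preserves kap exactly
    left
    apply le_antisymm
    · refine le_kap fun X hSX hXT => ?_
      rw [← lam_del_loop hloop heE (hXT.trans diff_subset)]
      refine kap_le (M := del M {e}) (subset_diff_singleton hSX heS) ?_
      rw [del_ground]
      exact fun x hx => ⟨⟨(hXT hx.1).1, hx.2⟩, (hXT hx.1).2⟩
    · refine le_kap fun X hSX hXT => ?_
      have hXe : X ⊆ M.E \ {e} := hXT.trans (by rw [del_ground]; exact diff_subset)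
      have hXE : X ⊆ M.E := hXe.trans diff_subset
      have hXeq : X \ {e} = X := diff_singleton_eq_self (fun h => (hXe h).2 rfl)
      rw [← hXeq, lam_del_loop hloop heE hXE]
      exact kap_le hSX (hXT.trans
        (by rw [del_ground]; exact diff_subset_diff_left diff_subset))
end

section
/- Let M be a matroid, let S, T be disjoint subsets of E(M), and let k := κ_M(S,T). Then there exist subsets S₁ ⊆ S and T₁ ⊆ T such that |S₁| = |T₁| = κ_M(S₁, T₁) = k. -/
open Set Matroid

namespace IntertwineAux

open Intertwine

variable {α : Type*} {M : Matroid α} {I J X Y S T S' : Set α}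

/-! ### ℕ∞ helpers -/

lemma enat_lt_add_one {k : ℕ∞} (hk : k ≠ ⊤) : k < k + 1 := by
  lift k to ℕ using hk
  exact_mod_cast Nat.lt_succ_self k

lemma enat_cancel {a b c : ℕ∞} (hc : c ≠ ⊤) (h : a + c ≤ b + c) : a ≤ b :=
  (WithTop.add_le_add_iff_right hc).mp h

/-! ### Rank lemmas -/

lemma le_eRk_of_indep (hJ : M.Indep J) (hJX : J ⊆ X) : J.encard ≤ Intertwine.eRk M X :=
  le_iSup₂_of_le J ⟨hJ, hJX⟩ le_rfl

lemma eRk_eq_encard (hI : M.IsBasis' I X) : Intertwine.eRk M X = I.encard := by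
  refine le_antisymm (iSup₂_le fun J hJ => ?_) (le_eRk_of_indep hI.indep hI.subset)
  obtain ⟨J', hJ', hsub⟩ := hJ.1.subset_isBasis'_of_subset hJ.2
  exact (encard_mono hsub).trans (hJ'.encard_eq_encard hI).le

lemma eRk_mono (M : Matroid α) (h : X ⊆ Y) : Intertwine.eRk M X ≤ Intertwine.eRk M Y :=
  iSup₂_le fun J hJ => le_eRk_of_indep hJ.1 (hJ.2.trans h)

lemma eRk_le_encard (M : Matroid α) (X : Set α) : Intertwine.eRk M X ≤ X.encard :=
  iSup₂_le fun _ hJ => encard_mono hJ.2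

lemma eRk_le_of_subset_closure (h : Y ⊆ M.closure X) : Intertwine.eRk M Y ≤ Intertwine.eRk M X := by
  obtain ⟨I, hI⟩ := M.exists_isBasis' X
  rw [eRk_eq_encard hI]
  refine iSup₂_le fun J hJ => ?_
  obtain ⟨J', hJ', hsub⟩ := hJ.1.subset_isBasis_of_subset (hJ.2.trans h)
    (M.closure_subset_ground X)
  exact (encard_mono hsub).trans (hJ'.encard_eq_encard hI.isBasis_closure_right).le

lemma eRk_submod (hX : X ⊆ M.E) (hY : Y ⊆ M.E) :
    Intertwine.eRk M (X ∪ Y) + Intertwine.eRk M (X ∩ Y) ≤ Intertwine.eRk M X + Intertwine.eRk M Y := by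
  obtain ⟨I, hI⟩ := M.exists_isBasis (X ∩ Y) (inter_subset_left.trans hX)
  obtain ⟨J, hJ, hIJ⟩ := hI.indep.subset_isBasis_of_subset
    (hI.subset.trans (inter_subset_left.trans subset_union_left)) (union_subset hX hY)
  have hIeq : I = J ∩ (X ∩ Y) :=
    hI.eq_of_subset_indep (hJ.indep.inter_right _) (subset_inter hIJ hI.subset)
      inter_subset_right
  have hJeq : J = (J ∩ X) ∪ (J ∩ Y) := by
    rw [← inter_union_distrib_left, inter_eq_left.mpr hJ.subset]
  have hkey : J.encard + I.encard = (J ∩ X).encard + (J ∩ Y).encard := by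
    rw [hIeq, show J ∩ (X ∩ Y) = (J ∩ X) ∩ (J ∩ Y) by ext x; simp only [mem_inter_iff]; tauto]
    nth_rewrite 1 [hJeq]
    exact encard_union_add_encard_inter _ _
  calc Intertwine.eRk M (X ∪ Y) + Intertwine.eRk M (X ∩ Y) = J.encard + I.encard := by
        rw [eRk_eq_encard hJ.isBasis', eRk_eq_encard hI.isBasis']
    _ = (J ∩ X).encard + (J ∩ Y).encard := hkey
    _ ≤ Intertwine.eRk M X + Intertwine.eRk M Y :=
        add_le_add (le_eRk_of_indep (hJ.indep.inter_right X) inter_subset_right)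
          (le_eRk_of_indep (hJ.indep.inter_right Y) inter_subset_right)

/-! ### lam lemmas (finite rank) -/

lemma eRank_le (hX : X ⊆ M.E) : Intertwine.eRk M M.E ≤ Intertwine.eRk M X + Intertwine.eRk M (M.E \ X) := by
  have h1 : M.E = X ∪ (M.E \ X) := by rw [union_diff_cancel hX]
  calc Intertwine.eRk M M.E = Intertwine.eRk M (X ∪ (M.E \ X)) := by rw [← h1]
    _ ≤ Intertwine.eRk M (X ∪ (M.E \ X)) + Intertwine.eRk M (X ∩ (M.E \ X)) := le_self_add
    _ ≤ Intertwine.eRk M X + Intertwine.eRk M (M.E \ X) := eRk_submod hX diff_subset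

lemma lam_add_eRank (hX : X ⊆ M.E) :
    lam M X + Intertwine.eRk M M.E = Intertwine.eRk M X + Intertwine.eRk M (M.E \ X) := by
  rw [lam, tsub_add_cancel_of_le (eRank_le hX)]

lemma lam_ne_top (hr : Intertwine.eRk M M.E ≠ ⊤) (hX : X ⊆ M.E) : lam M X ≠ ⊤ := by
  have h1 : lam M X ≤ Intertwine.eRk M X + Intertwine.eRk M (M.E \ X) :=
    (lam_add_eRank hX) ▸ le_self_add
  exact ne_top_of_le_ne_top
    (WithTop.add_ne_top.mpr ⟨ne_top_of_le_ne_top hr (eRk_mono M hX),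
      ne_top_of_le_ne_top hr (eRk_mono M diff_subset)⟩) h1

lemma lam_le_eRk (hr : Intertwine.eRk M M.E ≠ ⊤) (hX : X ⊆ M.E) : lam M X ≤ Intertwine.eRk M X := by
  refine enat_cancel hr ?_
  rw [lam_add_eRank hX]
  exact add_le_add le_rfl (eRk_mono M diff_subset)

lemma lam_submod (hr : Intertwine.eRk M M.E ≠ ⊤) (hX : X ⊆ M.E) (hY : Y ⊆ M.E) :
    lam M (X ∪ Y) + lam M (X ∩ Y) ≤ lam M X + lam M Y := by
  set r := Intertwine.eRk M M.E with hrdef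
  have e1 : M.E \ (X ∪ Y) = (M.E \ X) ∩ (M.E \ Y) := by ext; simp; tauto
  have e2 : M.E \ (X ∩ Y) = (M.E \ X) ∪ (M.E \ Y) := by ext; simp; tauto
  refine enat_cancel (show r + r ≠ ⊤ from WithTop.add_ne_top.mpr ⟨hr, hr⟩) ?_
  have lhs : (lam M (X ∪ Y) + lam M (X ∩ Y)) + (r + r)
      = (Intertwine.eRk M (X ∪ Y) + Intertwine.eRk M (X ∩ Y)) + (Intertwine.eRk M ((M.E \ X) ∪ (M.E \ Y))
          + Intertwine.eRk M ((M.E \ X) ∩ (M.E \ Y))) := by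
    have h1 := lam_add_eRank (M := M) (union_subset hX hY)
    have h2 := lam_add_eRank (M := M) (X := X ∩ Y) (inter_subset_left.trans hX)
    rw [e1] at h1; rw [e2] at h2
    calc (lam M (X ∪ Y) + lam M (X ∩ Y)) + (r + r)
        = (lam M (X ∪ Y) + r) + (lam M (X ∩ Y) + r) := by ring
      _ = (Intertwine.eRk M (X ∪ Y) + Intertwine.eRk M ((M.E \ X) ∩ (M.E \ Y)))
          + (Intertwine.eRk M (X ∩ Y) + Intertwine.eRk M ((M.E \ X) ∪ (M.E \ Y))) := by rw [h1, h2]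
      _ = _ := by ring
  have rhs : (lam M X + lam M Y) + (r + r)
      = (Intertwine.eRk M X + Intertwine.eRk M Y) + (Intertwine.eRk M (M.E \ X) + Intertwine.eRk M (M.E \ Y)) := by
    calc (lam M X + lam M Y) + (r + r) = (lam M X + r) + (lam M Y + r) := by ring
      _ = (Intertwine.eRk M X + Intertwine.eRk M (M.E \ X)) + (Intertwine.eRk M Y + Intertwine.eRk M (M.E \ Y)) := by
          rw [lam_add_eRank hX, lam_add_eRank hY]
      _ = _ := by ring
  rw [lhs, rhs]
  exact add_le_add (eRk_submod hX hY) (eRk_submod diff_subset diff_subset)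

/-! ### kap lemmas -/

lemma kap_le_lam (h1 : S ⊆ X) (h2 : X ⊆ M.E \ T) : kap M S T ≤ lam M X :=
  iInf₂_le X ⟨h1, h2⟩

lemma le_kap {c : ℕ∞} (h : ∀ X, S ⊆ X → X ⊆ M.E \ T → c ≤ lam M X) : c ≤ kap M S T :=
  le_iInf₂ fun X hX => h X hX.1 hX.2

lemma kap_mono_left (h : S' ⊆ S) : kap M S' T ≤ kap M S T :=
  le_kap fun X h1 h2 => kap_le_lam (h.trans h1) h2

lemma exists_lam_lt {c : ℕ∞} (h : kap M S T < c) :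
    ∃ X, S ⊆ X ∧ X ⊆ M.E \ T ∧ lam M X < c := by
  by_contra hcon
  push_neg at hcon
  exact absurd (le_kap fun X h1 h2 => hcon X h1 h2) h.not_ge

lemma kap_closure (hr : Intertwine.eRk M M.E ≠ ⊤) (hS'S : S' ⊆ S) (hScl : S ⊆ M.closure S')
    (hS : S ⊆ M.E) (hT : T ⊆ M.E) (hST : Disjoint S T) : kap M S T = kap M S' T := by
  refine le_antisymm (le_kap fun X h1 h2 => ?_) (kap_mono_left hS'S)
  have hXE : X ⊆ M.E := h2.trans diff_subset
  have hfeas : X ∪ S ⊆ M.E \ T := union_subset h2 (subset_diff.mpr ⟨hS, hST⟩)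
  refine (kap_le_lam subset_union_right hfeas).trans ?_
  refine enat_cancel hr ?_
  rw [lam_add_eRank (hfeas.trans diff_subset), lam_add_eRank hXE]
  have hcl : X ∪ S ⊆ M.closure X :=
    union_subset (M.subset_closure X hXE) (hScl.trans (M.closure_subset_closure h1))
  exact add_le_add (eRk_le_of_subset_closure hcl)
    (eRk_mono M (diff_subset_diff_right subset_union_left))

lemma kap_symm_le (hT : T ⊆ M.E) : kap M T S ≤ kap M S T := by
  refine le_kap fun X h1 h2 => ?_
  have hXE : X ⊆ M.E := h2.trans diff_subset
  have hTX : Disjoint T X := ((subset_diff.mp h2).2).symm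
  have : kap M T S ≤ lam M (M.E \ X) :=
    kap_le_lam (subset_diff.mpr ⟨hT, hTX⟩) (diff_subset_diff_right h1)
  refine this.trans_eq ?_
  rw [lam, lam, diff_diff_cancel_left hXE, add_comm]

lemma kap_symm (hS : S ⊆ M.E) (hT : T ⊆ M.E) : kap M S T = kap M T S :=
  le_antisymm (kap_symm_le hS) (kap_symm_le hT)

/-! ### Descent -/

lemma exists_del (hr : Intertwine.eRk M M.E ≠ ⊤) (hS : S ⊆ M.E) (hT : T ⊆ M.E) (hST : Disjoint S T)
    (hk : kap M S T < S.encard) : ∃ s ∈ S, kap M (S \ {s}) T = kap M S T := by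
  set k := kap M S T with hkdef
  have hktop : k ≠ ⊤ := ne_top_of_lt hk
  by_contra hcon
  push_neg at hcon
  have hwit : ∀ s ∈ S, ∃ X, S \ {s} ⊆ X ∧ X ⊆ M.E \ T ∧ lam M X + 1 ≤ k := by
    intro s hs
    have hlt : kap M (S \ {s}) T < k :=
      lt_of_le_of_ne (kap_mono_left diff_subset) (hcon s hs)
    obtain ⟨X, h1, h2, h3⟩ := exists_lam_lt hlt
    exact ⟨X, h1, h2, (ENat.add_one_le_iff (lam_ne_top hr (h2.trans diff_subset))).mpr h3⟩
  obtain ⟨F, hFS, hFcard⟩ := Set.exists_subset_encard_eq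
    ((ENat.add_one_le_iff hktop).mpr hk)
  have hFfin : F.Finite := by
    rw [← encard_ne_top_iff, hFcard]
    exact WithTop.add_ne_top.mpr ⟨hktop, WithTop.one_ne_top⟩
  have claim : ∀ G : Set α, G.Finite → G ⊆ S → ∃ Y, S \ G ⊆ Y ∧ Y ⊆ M.E \ T ∧ lam M Y + G.encard ≤ k := by
    intro G hGfin
    refine Set.Finite.induction_on G hGfin ?_ ?_
    · intro _
      obtain ⟨Y, h1, h2, h3⟩ := exists_lam_lt (show kap M S T < k + 1 from enat_lt_add_one hktop)
      exact ⟨Y, diff_empty ▸ h1, h2,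
        by simpa using (ENat.lt_add_one_iff hktop).mp h3⟩
    · intro a F' haF' hF'fin ih hins
      have haS : a ∈ S := hins (mem_insert a F')
      obtain ⟨Y, hY1, hY2, hY3⟩ := ih ((subset_insert a F').trans hins)
      obtain ⟨X, hX1, hX2, hX3⟩ := hwit a haS
      have hYE : Y ⊆ M.E := hY2.trans diff_subset
      have hXE : X ⊆ M.E := hX2.trans diff_subset
      have hSYX : S ⊆ Y ∪ X := by
        intro t ht
        by_cases hta : t = a
        · exact Or.inl (hY1 ⟨ht, fun h => haF' (hta ▸ h)⟩)
        · exact Or.inr (hX1 ⟨ht, by simpa using hta⟩)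
      have hfeas : Y ∪ X ⊆ M.E \ T := union_subset hY2 hX2
      have hu : k ≤ lam M (Y ∪ X) := kap_le_lam hSYX hfeas
      have hsub : lam M (Y ∪ X) + lam M (Y ∩ X) ≤ lam M Y + lam M X :=
        lam_submod hr hYE hXE
      refine ⟨Y ∩ X, ?_, (inter_subset_left.trans hY2), ?_⟩
      · rintro t ⟨htS, htn⟩
        simp only [mem_insert_iff, not_or] at htn
        exact ⟨hY1 ⟨htS, htn.2⟩, hX1 ⟨htS, by simpa using htn.1⟩⟩
      · rw [encard_insert_of_notMem haF']
        refine enat_cancel hktop ?_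
        calc (lam M (Y ∩ X) + (F'.encard + 1)) + k
            ≤ (lam M (Y ∩ X) + (F'.encard + 1)) + lam M (Y ∪ X) := add_le_add le_rfl hu
          _ = (lam M (Y ∪ X) + lam M (Y ∩ X)) + (F'.encard + 1) := by ring
          _ ≤ (lam M Y + lam M X) + (F'.encard + 1) := add_le_add hsub le_rfl
          _ = (lam M Y + F'.encard) + (lam M X + 1) := by ring
          _ ≤ k + k := add_le_add hY3 hX3
  obtain ⟨Y, -, -, hY3⟩ := claim F hFfin hFS
  rw [hFcard] at hY3
  have : k + 1 ≤ k := le_trans le_add_self hY3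
  exact absurd (this.trans_lt (enat_lt_add_one hktop)) (lt_irrefl _)

lemma descent (hr : Intertwine.eRk M M.E ≠ ⊤) :
    ∀ n : ℕ, ∀ S : Set α, S.Finite → S.ncard ≤ n → S ⊆ M.E → T ⊆ M.E → Disjoint S T →
      ∃ S₁, S₁ ⊆ S ∧ S₁.encard = kap M S T ∧ kap M S₁ T = kap M S T := by
  intro n
  induction n with
  | zero =>
    intro S hfin hcard hS hT hST
    have hSe : S = ∅ := by
      rwa [Nat.le_zero, Set.ncard_eq_zero hfin] at hcard
    subst hSe
    have h0 : kap M ∅ T = 0 := by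
      refine le_antisymm ((kap_le_lam (empty_subset _) (empty_subset _)).trans ?_) zero_le
      exact (lam_le_eRk hr (empty_subset _)).trans (by simpa using eRk_le_encard M ∅)
    exact ⟨∅, Subset.rfl, by simp [h0], rfl⟩
  | succ n ih =>
    intro S hfin hcard hS hT hST
    by_cases hle : S.encard ≤ kap M S T
    · refine ⟨S, Subset.rfl, ?_, rfl⟩
      refine le_antisymm hle ?_
      exact (kap_le_lam Subset.rfl (subset_diff.mpr ⟨hS, hST⟩)).trans
        ((lam_le_eRk hr hS).trans (eRk_le_encard M S))
    · push_neg at hle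
      obtain ⟨s, hsS, hkap⟩ := exists_del hr hS hT hST hle
      have hcard' : (S \ {s}).ncard ≤ n := by
        have := Set.ncard_diff_singleton_add_one hsS hfin
        omega
      obtain ⟨S₁, h1, h2, h3⟩ := ih (S \ {s}) hfin.diff hcard'
        (diff_subset.trans hS) hT (hST.mono_left diff_subset)
      exact ⟨S₁, h1.trans diff_subset, h2.trans hkap, h3.trans hkap⟩

end IntertwineAux


open IntertwineAux Set in
open Intertwine in
/-- There exist `S₁ ⊆ S` and `T₁ ⊆ T` with `|S₁| = |T₁| = κ_M(S₁,T₁) = κ_M(S,T)`. -/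
theorem exists_small_linked_subsets {α : Type*} (M : Matroid α)
    (S T : Set α) (hS : S ⊆ M.E) (hT : T ⊆ M.E) (hST : Disjoint S T) :
    ∃ S₁ T₁ : Set α, S₁ ⊆ S ∧ T₁ ⊆ T ∧
      S₁.encard = kap M S T ∧ T₁.encard = kap M S T ∧ kap M S₁ T₁ = kap M S T := by
  by_cases hr : Intertwine.eRk M M.E = ⊤
  · have hlam : ∀ X : Set α, lam M X = 0 := by
      intro X; rw [lam, hr]; exact tsub_eq_zero_of_le le_top
    have hz : ∀ S' T' : Set α, S' ⊆ M.E → Disjoint S' T' → kap M S' T' = 0 := by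
      intro S' T' h1 h2
      exact le_antisymm ((kap_le_lam Subset.rfl (subset_diff.mpr ⟨h1, h2⟩)).trans_eq
        (hlam _)) zero_le
    exact ⟨∅, ∅, empty_subset _, empty_subset _,
      by rw [hz S T hS hST, encard_empty],
      by rw [hz S T hS hST, encard_empty],
      by rw [hz S T hS hST, hz ∅ ∅ (empty_subset _) (Set.disjoint_empty ∅)]⟩
  · obtain ⟨I, hI⟩ := M.exists_isBasis S hS
    have hIfin : I.Finite := by
      rw [← encard_ne_top_iff, ← eRk_eq_encard hI.isBasis']
      exact ne_top_of_le_ne_top hr (eRk_mono M hS)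
    have hIE : I ⊆ M.E := hI.indep.subset_ground
    have hIT : Disjoint I T := hST.mono_left hI.subset
    have hkapI : kap M I T = kap M S T :=
      (kap_closure hr hI.subset hI.subset_closure hS hT hST).symm
    obtain ⟨S₁, hS₁I, hS₁card, hS₁kap⟩ :=
      descent hr I.ncard I hIfin le_rfl hIE hT hIT
    have hS₁S : S₁ ⊆ S := hS₁I.trans hI.subset
    have hS₁E : S₁ ⊆ M.E := hS₁S.trans hS
    have hS₁k : kap M S₁ T = kap M S T := hS₁kap.trans hkapI
    -- T side
    obtain ⟨J, hJ⟩ := M.exists_isBasis T hT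
    have hJfin : J.Finite := by
      rw [← encard_ne_top_iff, ← eRk_eq_encard hJ.isBasis']
      exact ne_top_of_le_ne_top hr (eRk_mono M hT)
    have hJE : J ⊆ M.E := hJ.indep.subset_ground
    have hTS₁ : Disjoint T S₁ := (hST.symm.mono_right hS₁S)
    have hkapTS₁ : kap M T S₁ = kap M S T := by
      rw [← kap_symm hS₁E hT, hS₁k]
    have hkapJ : kap M J S₁ = kap M S T := by
      rw [kap_closure hr hJ.subset hJ.subset_closure hT hS₁E hTS₁] at hkapTS₁
      exact hkapTS₁
    obtain ⟨T₁, hT₁J, hT₁card, hT₁kap⟩ :=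
      descent hr J.ncard J hJfin le_rfl hJE hS₁E (hTS₁.mono_left hJ.subset)
    have hT₁T : T₁ ⊆ T := hT₁J.trans hJ.subset
    refine ⟨S₁, T₁, hS₁S, hT₁T, hS₁card.trans hkapI, hT₁card.trans hkapJ, ?_⟩
    rw [kap_symm hS₁E (hT₁T.trans hT), hT₁kap.trans hkapJ]
end
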